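/- Let d ≥ 1 be an integer, let α ∈ (0,2] with α < d, and let β ∈ (0,1). Let φ : ℝ^d → [0,∞) be continuous with compact support and not identically 0. Then ∫_{ℝ^d} ( ∫_{ℝ^d} φ(y) ‖x−y‖^{−(d−α)} dy )^{1+β} dx < ∞ if and only if d > α(1 + 1/β). -/

import Mathlib

set_option maxHeartbeats 1000000

open MeasureTheory Metric Set Module


lemma tail_top (d : ℕ) (hd : 1 ≤ d) (p : ℝ) (hp0 : 0 < p) (hp : p ≤ d) (R₀ : ℝ) (hR₀ : 1 ≤ R₀) :
    ∫⁻ x in {x : EuclideanSpace ℝ (Fin d) | R₀ ≤ ‖x‖}, ENNReal.ofReal (‖x‖ ^ (-p)) = ⊤ := by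
  have hfr : finrank ℝ (EuclideanSpace ℝ (Fin d)) = d := by
    simp [finrank_euclideanSpace]
  haveI : Nontrivial (EuclideanSpace ℝ (Fin d)) := nontrivial_of_finrank_pos (R := ℝ)
    (by rw [hfr]; exact hd)
  set ι := volume (ball (0 : EuclideanSpace ℝ (Fin d)) 1) with hι
  have hι0 : 0 < ι := measure_ball_pos _ _ one_pos
  have hιt : ι < ⊤ := measure_ball_lt_top
  set b : ℕ → ℝ := fun k => R₀ * 2 ^ k with hb
  have hb1 : ∀ k, (1:ℝ) ≤ b k := by
    intro k
    have h2k : (1:ℝ) ≤ 2 ^ k := one_le_pow₀ one_le_two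
    have : (1:ℝ) * 1 ≤ R₀ * 2 ^ k := mul_le_mul hR₀ h2k one_pos.le (by linarith)
    simpa [hb] using this
  have hb0 : ∀ k, (0:ℝ) < b k := fun k => lt_of_lt_of_le one_pos (hb1 k)
  have hbmul : ∀ k, b (k+1) = 2 * b k := by intro k; simp [hb, pow_succ]; ring
  have hbmono : ∀ k, b k ≤ b (k+1) := by intro k; rw [hbmul]; nlinarith [hb0 k]
  set A : ℕ → Set (EuclideanSpace ℝ (Fin d)) := fun k => (fun x : EuclideanSpace ℝ (Fin d) => ‖x‖) ⁻¹' (Ico (b k) (b (k+1))) with hA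
  have hAm : ∀ k, MeasurableSet (A k) := fun k => measurable_norm measurableSet_Ico
  have hAdisj : Pairwise (Function.onFun Disjoint A) := by
    have key : ∀ i j : ℕ, i < j → Disjoint (A i) (A j) := by
      intro i j hij
      refine Set.disjoint_left.2 fun x hxi hxj => ?_
      have h1 : ‖x‖ < b (i+1) := hxi.2
      have h2 : b j ≤ ‖x‖ := hxj.1
      have h3 : b (i+1) ≤ b j := by
        have h2le : (2:ℝ) ^ (i+1) ≤ 2 ^ j := pow_le_pow_right₀ one_le_two hij
        have := hb0 0
        simp only [hb] at *
        nlinarith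
      linarith
    intro i j hij
    rcases hij.lt_or_gt with h | h
    · exact key _ _ h
    · exact (key _ _ h).symm
  have hsub : (⋃ k, A k) ⊆ {x : EuclideanSpace ℝ (Fin d) | R₀ ≤ ‖x‖} := by
    intro x hx
    rcases mem_iUnion.1 hx with ⟨k, hk⟩
    have h1 : b k ≤ ‖x‖ := hk.1
    have h2k : (1:ℝ) ≤ 2 ^ k := one_le_pow₀ one_le_two
    have : R₀ ≤ b k := by simp only [hb]; nlinarith
    exact le_trans this h1
  have hAvol : ∀ k, volume (A k) = ENNReal.ofReal (b (k+1) ^ d - b k ^ d) * ι := by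
    intro k
    have hset : A k = ball (0 : EuclideanSpace ℝ (Fin d)) (b (k+1)) \ ball 0 (b k) := by
      ext x
      simp only [hA, Set.mem_preimage, mem_Ico, mem_diff, mem_ball_zero_iff, not_lt]
      tauto
    rw [hset, measure_diff (ball_subset_ball (hbmono k)) measurableSet_ball.nullMeasurableSet
        measure_ball_lt_top.ne,
      Measure.addHaar_ball _ _ (hb0 _).le, Measure.addHaar_ball _ _ (hb0 _).le, hfr,
      ← ENNReal.sub_mul (fun _ _ => hιt.ne), ← ENNReal.ofReal_sub _ (by positivity)]
  set c₀ : ℝ := ((2:ℝ) ^ d - 1) / 2 ^ d with hc₀def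
  have h2d : (2:ℝ) ≤ 2 ^ d := by
    calc (2:ℝ) = 2 ^ 1 := (pow_one 2).symm
    _ ≤ 2 ^ d := pow_le_pow_right₀ one_le_two hd
  have hc₀ : 0 < c₀ := div_pos (by linarith) (by positivity)
  have hck : ∀ k, c₀ ≤ b (k+1) ^ (-p) * (b (k+1) ^ d - b k ^ d) := by
    intro k
    have e1 : (b k : ℝ) ^ d * 2 ^ d = b (k+1) ^ d := by
      rw [← mul_pow, hbmul]; ring_nf
    have h2 : b (k+1) ^ (-p) * b k ^ d * 2 ^ d = b (k+1) ^ ((-p) + d) := by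
      calc b (k+1) ^ (-p) * b k ^ d * 2 ^ d = b (k+1) ^ (-p) * (b k ^ d * 2 ^ d) := by ring
      _ = b (k+1) ^ (-p) * b (k+1) ^ d := by rw [e1]
      _ = b (k+1) ^ (-p) * b (k+1) ^ ((d:ℕ) : ℝ) := by rw [Real.rpow_natCast]
      _ = b (k+1) ^ ((-p) + d) := (Real.rpow_add (hb0 _) _ _).symm
    have h3 : (1:ℝ) ≤ b (k+1) ^ ((-p) + d) :=
      Real.one_le_rpow (hb1 _) (by push_cast; linarith)
    have h4 : (1:ℝ) ≤ b (k+1) ^ (-p) * b k ^ d * 2 ^ d := by rw [h2]; exact h3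
    have h5 : b (k+1) ^ d - b k ^ d = b k ^ d * ((2:ℝ) ^ d - 1) := by
      rw [← e1]; ring
    rw [h5, hc₀def]
    rw [div_le_iff₀ (by positivity : (0:ℝ) < (2:ℝ) ^ d)]
    nlinarith [Real.rpow_nonneg (hb0 (k+1)).le (-p), pow_pos (hb0 k) d]
  set ε := ENNReal.ofReal c₀ * ι with hε
  have hεne : ε ≠ 0 := by
    simp only [hε]
    exact mul_ne_zero (by simp [ENNReal.ofReal_eq_zero, not_le]; exact hc₀) hι0.ne'
  have hak : ∀ k, ε ≤ ∫⁻ x in A k, ENNReal.ofReal (‖x‖ ^ (-p)) := by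
    intro k
    calc ε ≤ ENNReal.ofReal (b (k+1) ^ (-p) * (b (k+1) ^ d - b k ^ d)) * ι :=
          mul_le_mul_left (ENNReal.ofReal_le_ofReal (hck k)) ι
    _ = ENNReal.ofReal (b (k+1) ^ (-p)) * (ENNReal.ofReal (b (k+1) ^ d - b k ^ d) * ι) := by
          rw [ENNReal.ofReal_mul (Real.rpow_nonneg (hb0 _).le _), mul_assoc]
    _ = ENNReal.ofReal (b (k+1) ^ (-p)) * volume (A k) := by rw [hAvol]
    _ = ∫⁻ _ in A k, ENNReal.ofReal (b (k+1) ^ (-p)) := (setLIntegral_const _ _).symm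
    _ ≤ ∫⁻ x in A k, ENNReal.ofReal (‖x‖ ^ (-p)) := by
          refine setLIntegral_mono (by fun_prop) fun x hx => ?_
          refine ENNReal.ofReal_le_ofReal ?_
          exact Real.rpow_le_rpow_of_nonpos (lt_of_lt_of_le (hb0 k) hx.1) hx.2.le
            (neg_nonpos.2 hp0.le)
  have hfin : (⊤ : ENNReal) ≤ ∫⁻ x in {x : EuclideanSpace ℝ (Fin d) | R₀ ≤ ‖x‖},
      ENNReal.ofReal (‖x‖ ^ (-p)) := by
    calc (⊤ : ENNReal) = ∑' _ : ℕ, ε := (ENNReal.tsum_const_eq_top_of_ne_zero hεne).symm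
    _ ≤ ∑' k, ∫⁻ x in A k, ENNReal.ofReal (‖x‖ ^ (-p)) := ENNReal.tsum_le_tsum hak
    _ = ∫⁻ x in ⋃ k, A k, ENNReal.ofReal (‖x‖ ^ (-p)) := (lintegral_iUnion hAm hAdisj _).symm
    _ ≤ _ := lintegral_mono_set hsub
  exact top_le_iff.1 hfin


lemma ball_fin (d : ℕ) (hd : 1 ≤ d) (s : ℝ) (hs0 : 0 < s) (hsd : s < d) (r : ℝ) (hr : 0 < r) :
    ∫⁻ x in closedBall (0 : EuclideanSpace ℝ (Fin d)) r, ENNReal.ofReal (‖x‖ ^ (-s)) < ⊤ := by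
  have hfr : finrank ℝ (EuclideanSpace ℝ (Fin d)) = d := by
    simp [finrank_euclideanSpace]
  haveI : Nontrivial (EuclideanSpace ℝ (Fin d)) := nontrivial_of_finrank_pos (R := ℝ)
    (by rw [hfr]; exact hd)
  set u : ℝ := 2 * r with hu_def
  have hu : 0 < u := by positivity
  set b : ℕ → ℝ := fun k => u * (2⁻¹ : ℝ) ^ k with hb
  have hb0 : ∀ k, 0 < b k := by intro k; positivity
  have hbpow : ∀ k, b k = u / 2 ^ k := by
    intro k; simp only [hb]; rw [inv_pow, div_eq_mul_inv]
  set A : ℕ → Set (EuclideanSpace ℝ (Fin d)) :=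
    fun k => (fun x : EuclideanSpace ℝ (Fin d) => ‖x‖) ⁻¹' (Ioc (b (k+1)) (b k)) with hA
  have hcover : closedBall (0 : EuclideanSpace ℝ (Fin d)) r ⊆ {0} ∪ ⋃ k, A k := by
    intro x hx
    rcases eq_or_ne x 0 with h0 | h0
    · exact Or.inl h0
    · refine Or.inr (mem_iUnion.2 ?_)
      have ht : 0 < ‖x‖ := norm_pos_iff.2 h0
      have hxr : ‖x‖ ≤ r := by simpa [mem_closedBall, dist_zero_right] using hx
      have hy1 : (1:ℝ) ≤ u / ‖x‖ := by
        rw [le_div_iff₀ ht]; simp only [hu_def]; linarith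
      obtain ⟨n, hn1, hn2⟩ := exists_nat_pow_near hy1 (one_lt_two (α := ℝ))
      refine ⟨n, ?_⟩
      simp only [hA, Set.mem_preimage, mem_Ioc]
      constructor
      · rw [hbpow]
        rw [div_lt_iff₀ (by positivity)]
        rw [div_lt_iff₀ ht] at hn2
        linarith [hn2]
      · rw [hbpow]
        rw [le_div_iff₀ (by positivity)]
        rw [le_div_iff₀ ht] at hn1
        linarith [hn1]
  set κ := volume (ball (0 : EuclideanSpace ℝ (Fin d)) 1) with hκ
  have hκt : κ < ⊤ := measure_ball_lt_top
  set c : ℝ := (2⁻¹ : ℝ) ^ (-s) with hc_def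
  have hc0 : 0 ≤ c := Real.rpow_nonneg (by norm_num) _
  set K : ℝ := u ^ (-s) * u ^ d * c with hK_def
  have hK0 : 0 ≤ K := by
    have := Real.rpow_nonneg hu.le (-s); positivity
  set ρ : ℝ := c * (2⁻¹ : ℝ) ^ d with hρ_def
  have hρ0 : 0 ≤ ρ := by positivity
  have hρ1 : ρ < 1 := by
    have : ρ = (2⁻¹ : ℝ) ^ (-s + d) := by
      rw [hρ_def, hc_def, Real.rpow_add (by norm_num : (0:ℝ) < 2⁻¹), Real.rpow_natCast]
    rw [this]
    exact Real.rpow_lt_one (by norm_num) (by norm_num) (by push_cast; linarith)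
  have e1 : ∀ k : ℕ, b k ^ d = u ^ d * ((2⁻¹:ℝ) ^ d) ^ k := by
    intro k; simp only [hb]; rw [mul_pow, ← pow_mul, ← pow_mul, Nat.mul_comm]
  have e2 : ∀ k : ℕ, b k ^ (-s) = u ^ (-s) * c ^ k := by
    intro k
    simp only [hb]
    rw [Real.mul_rpow hu.le (by positivity)]
    congr 1
    rw [← Real.rpow_natCast (2⁻¹:ℝ) k, ← Real.rpow_mul (by norm_num), mul_comm,
      Real.rpow_mul (by norm_num), Real.rpow_natCast, hc_def]
  have e3 : ∀ k : ℕ, b (k+1) ^ (-s) * b k ^ d = K * ρ ^ k := by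
    intro k
    rw [e2, e1, hK_def, hρ_def, mul_pow]
    ring
  have hterm : ∀ k : ℕ, ∫⁻ x in A k, ENNReal.ofReal (‖x‖ ^ (-s))
      ≤ (ENNReal.ofReal K * κ) * (ENNReal.ofReal ρ) ^ k := by
    intro k
    have hle : ∫⁻ x in A k, ENNReal.ofReal (‖x‖ ^ (-s))
        ≤ ∫⁻ _ in A k, ENNReal.ofReal (b (k+1) ^ (-s)) := by
      refine setLIntegral_mono measurable_const fun x hx => ?_
      exact ENNReal.ofReal_le_ofReal
        (Real.rpow_le_rpow_of_nonpos (hb0 (k+1)) hx.1.le (neg_nonpos.2 hs0.le))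
    have hvol : volume (A k) ≤ ENNReal.ofReal (b k ^ d) * κ := by
      have hsub2 : A k ⊆ closedBall (0 : EuclideanSpace ℝ (Fin d)) (b k) := by
        intro x hx
        simpa [mem_closedBall, dist_zero_right] using hx.2
      calc volume (A k) ≤ volume (closedBall (0 : EuclideanSpace ℝ (Fin d)) (b k)) :=
            measure_mono hsub2
      _ = ENNReal.ofReal (b k ^ d) * κ := by
            rw [Measure.addHaar_closedBall _ _ (hb0 k).le, hfr, hκ]
    calc ∫⁻ x in A k, ENNReal.ofReal (‖x‖ ^ (-s))
        ≤ ∫⁻ _ in A k, ENNReal.ofReal (b (k+1) ^ (-s)) := hle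
    _ = ENNReal.ofReal (b (k+1) ^ (-s)) * volume (A k) := setLIntegral_const _ _
    _ ≤ ENNReal.ofReal (b (k+1) ^ (-s)) * (ENNReal.ofReal (b k ^ d) * κ) :=
          mul_le_mul_right hvol _
    _ = ENNReal.ofReal (b (k+1) ^ (-s) * b k ^ d) * κ := by
          rw [ENNReal.ofReal_mul (Real.rpow_nonneg (hb0 _).le _), mul_assoc]
    _ = (ENNReal.ofReal K * κ) * (ENNReal.ofReal ρ) ^ k := by
          rw [e3, ENNReal.ofReal_mul hK0, ← ENNReal.ofReal_pow hρ0]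
          ring
  calc ∫⁻ x in closedBall (0 : EuclideanSpace ℝ (Fin d)) r, ENNReal.ofReal (‖x‖ ^ (-s))
      ≤ ∫⁻ x in ({0} ∪ ⋃ k, A k : Set (EuclideanSpace ℝ (Fin d))), ENNReal.ofReal (‖x‖ ^ (-s)) :=
        lintegral_mono_set hcover
  _ ≤ (∫⁻ x in ({0} : Set (EuclideanSpace ℝ (Fin d))), ENNReal.ofReal (‖x‖ ^ (-s)))
      + ∫⁻ x in (⋃ k, A k), ENNReal.ofReal (‖x‖ ^ (-s)) := lintegral_union_le _ _ _
  _ = ∫⁻ x in (⋃ k, A k), ENNReal.ofReal (‖x‖ ^ (-s)) := by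
        rw [setLIntegral_measure_zero _ _ (measure_singleton 0), zero_add]
  _ ≤ ∑' k, ∫⁻ x in A k, ENNReal.ofReal (‖x‖ ^ (-s)) := lintegral_iUnion_le _ _
  _ ≤ ∑' k, (ENNReal.ofReal K * κ) * (ENNReal.ofReal ρ) ^ k := ENNReal.tsum_le_tsum hterm
  _ = (ENNReal.ofReal K * κ) * ∑' k, (ENNReal.ofReal ρ) ^ k := ENNReal.tsum_mul_left
  _ = (ENNReal.ofReal K * κ) * (1 - ENNReal.ofReal ρ)⁻¹ := by rw [ENNReal.tsum_geometric]
  _ < ⊤ := by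
        refine ENNReal.mul_lt_top (ENNReal.mul_lt_top ENNReal.ofReal_lt_top hκt) ?_
        rw [ENNReal.inv_lt_top]
        exact tsub_pos_iff_lt.2 (ENNReal.ofReal_lt_one.2 hρ1)


lemma tail_fin (d : ℕ) (p : ℝ) (hp : (d:ℝ) < p) :
    ∫⁻ x in {x : EuclideanSpace ℝ (Fin d) | 1 ≤ ‖x‖}, ENNReal.ofReal (‖x‖ ^ (-p)) < ⊤ := by
  have hfr : finrank ℝ (EuclideanSpace ℝ (Fin d)) = d := by simp [finrank_euclideanSpace]
  have hp0 : 0 < p := lt_of_le_of_lt (Nat.cast_nonneg d) hp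
  have key : ∀ x : EuclideanSpace ℝ (Fin d), 1 ≤ ‖x‖ →
      ‖x‖ ^ (-p) ≤ (2:ℝ) ^ p * (1 + ‖x‖) ^ (-p) := by
    intro x hx
    have hx0 : (0:ℝ) < ‖x‖ := lt_of_lt_of_le one_pos hx
    have h1 : (1 + ‖x‖) ≤ 2 * ‖x‖ := by linarith
    have h2 : (2 * ‖x‖ : ℝ) ^ (-p) ≤ (1 + ‖x‖) ^ (-p) :=
      Real.rpow_le_rpow_of_nonpos (by linarith) h1 (neg_nonpos.2 hp0.le)
    have h3 : (2 * ‖x‖ : ℝ) ^ (-p) = (2:ℝ) ^ (-p) * ‖x‖ ^ (-p) :=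
      Real.mul_rpow (by norm_num) (norm_nonneg x)
    have h4 : (2:ℝ) ^ p * (2:ℝ) ^ (-p) = 1 := by
      rw [← Real.rpow_add two_pos]; simp
    calc ‖x‖ ^ (-p) = (2:ℝ) ^ p * ((2 * ‖x‖ : ℝ) ^ (-p)) := by rw [h3, ← mul_assoc, h4, one_mul]
    _ ≤ (2:ℝ) ^ p * (1 + ‖x‖) ^ (-p) :=
        mul_le_mul_of_nonneg_left h2 (Real.rpow_nonneg (by norm_num) _)
  calc ∫⁻ x in {x : EuclideanSpace ℝ (Fin d) | 1 ≤ ‖x‖}, ENNReal.ofReal (‖x‖ ^ (-p))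
      ≤ ∫⁻ x in {x : EuclideanSpace ℝ (Fin d) | 1 ≤ ‖x‖},
          ENNReal.ofReal ((2:ℝ) ^ p * (1 + ‖x‖) ^ (-p)) := by
        refine setLIntegral_mono (by fun_prop) fun x hx => ENNReal.ofReal_le_ofReal (key x hx)
  _ ≤ ∫⁻ x : EuclideanSpace ℝ (Fin d), ENNReal.ofReal ((2:ℝ) ^ p * (1 + ‖x‖) ^ (-p)) :=
        setLIntegral_le_lintegral _ _
  _ = ENNReal.ofReal ((2:ℝ) ^ p) * ∫⁻ x : EuclideanSpace ℝ (Fin d),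
        ENNReal.ofReal ((1 + ‖x‖) ^ (-p)) := by
        simp_rw [ENNReal.ofReal_mul (Real.rpow_nonneg (by norm_num : (0:ℝ) ≤ 2) p)]
        exact lintegral_const_mul _ (by fun_prop)
  _ < ⊤ := ENNReal.mul_lt_top ENNReal.ofReal_lt_top (finite_integral_one_add_norm (by rw [hfr]; exact hp))

open MeasureTheory Filter Topology Metric Set Module

theorem stmt17 (d : ℕ) (hd : 1 ≤ d) (α : ℝ) (hα0 : 0 < α) (hα2 : α ≤ 2) (hαd : α < d)
    (β : ℝ) (hβ0 : 0 < β) (hβ1 : β < 1)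
    (φ : EuclideanSpace ℝ (Fin d) → ℝ) (hcont : Continuous φ)
    (hsupp : HasCompactSupport φ) (hnonneg : ∀ x, 0 ≤ φ x) (hne : φ ≠ 0) :
    (∫⁻ x : EuclideanSpace ℝ (Fin d),
        ENNReal.ofReal
          ((∫ y : EuclideanSpace ℝ (Fin d), φ y * ‖x - y‖ ^ (-((d:ℝ) - α))) ^ (1 + β)))
      < ⊤ ↔ (d:ℝ) > α * (1 + 1 / β) := by
  classical
  set s : ℝ := (d:ℝ) - α with hs_def
  have hs0 : 0 < s := by simp only [hs_def]; linarith
  have hsd : s < d := by simp only [hs_def]; linarith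
  -- support radius
  obtain ⟨R₁, hR₁⟩ := hsupp.isCompact.isBounded.subset_closedBall 0
  set R : ℝ := max R₁ 1 with hR_def
  have hR1 : 1 ≤ R := le_max_right _ _
  have hR0 : 0 < R := lt_of_lt_of_le one_pos hR1
  have hRsupp : ∀ y, φ y ≠ 0 → ‖y‖ ≤ R := by
    intro y hy
    have h1 : y ∈ tsupport φ := subset_tsupport φ hy
    have h2 := hR₁ h1
    rw [mem_closedBall, dist_zero_right] at h2
    exact le_trans h2 (le_max_left _ _)
  obtain ⟨Cφ, hCφ⟩ := hcont.bounded_above_of_compact_support hsupp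
  have hCφ' : ∀ y, φ y ≤ Cφ := fun y =>
    le_trans (le_abs_self _) (by rw [← Real.norm_eq_abs]; exact hCφ y)
  have hCφ0 : 0 ≤ Cφ := le_trans (hnonneg 0) (hCφ' 0)
  -- the integrable kernel majorant
  set ker : EuclideanSpace ℝ (Fin d) → ℝ :=
    (closedBall (0 : EuclideanSpace ℝ (Fin d)) 1).indicator (fun z => ‖z‖ ^ (-s)) with hker
  have hker_meas : Measurable ker :=
    Measurable.indicator (by fun_prop) measurableSet_closedBall
  have hker_nonneg : ∀ z, 0 ≤ ker z := fun z =>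
    Set.indicator_nonneg (fun z _ => Real.rpow_nonneg (norm_nonneg z) _) z
  have hker_int : Integrable ker := by
    constructor
    · exact hker_meas.aestronglyMeasurable
    · rw [hasFiniteIntegral_iff_ofReal (Eventually.of_forall hker_nonneg)]
      have heq : ∫⁻ z, ENNReal.ofReal (ker z)
          = ∫⁻ z in closedBall (0 : EuclideanSpace ℝ (Fin d)) 1,
              ENNReal.ofReal (‖z‖ ^ (-s)) := by
        rw [← lintegral_indicator measurableSet_closedBall]
        congr 1
        ext z
        by_cases hz : z ∈ closedBall (0 : EuclideanSpace ℝ (Fin d)) 1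
        · simp [hker, Set.indicator_of_mem hz]
        · simp [hker, Set.indicator_of_notMem hz]
      rw [heq]
      exact ball_fin d hd s hs0 hsd 1 one_pos
  have hkerb : ∀ z : EuclideanSpace ℝ (Fin d), ‖z‖ ^ (-s) ≤ ker z + 1 := by
    intro z
    by_cases hz : z ∈ closedBall (0 : EuclideanSpace ℝ (Fin d)) 1
    · simp only [hker, Set.indicator_of_mem hz]; linarith
    · simp only [hker, Set.indicator_of_notMem hz, zero_add]
      rw [mem_closedBall, dist_zero_right, not_le] at hz
      exact Real.rpow_le_one_of_one_le_of_nonpos hz.le (neg_nonpos.2 hs0.le)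
  -- majorant for the inner integrand
  set maj : EuclideanSpace ℝ (Fin d) → EuclideanSpace ℝ (Fin d) → ℝ :=
    fun x y => Cφ * ker (x - y) +
      (closedBall (0 : EuclideanSpace ℝ (Fin d)) R).indicator (fun _ => Cφ) y with hmaj
  have hmaj_int : ∀ x, Integrable (maj x) := by
    intro x
    exact ((hker_int.comp_sub_left x).const_mul Cφ).add
      ((integrableOn_const measure_closedBall_lt_top.ne).integrable_indicator
        measurableSet_closedBall)
  have hmaj_nonneg : ∀ x y, 0 ≤ maj x y := by
    intro x y
    have h1 : 0 ≤ (closedBall (0 : EuclideanSpace ℝ (Fin d)) R).indicator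
        (fun _ => Cφ) y := Set.indicator_nonneg (fun _ _ => hCφ0) y
    have h2 := hker_nonneg (x - y)
    simp only [hmaj]
    positivity
  have hmaj_ge : ∀ x y, φ y * ‖x - y‖ ^ (-s) ≤ maj x y := by
    intro x y
    by_cases hy : φ y = 0
    · rw [hy, zero_mul]; exact hmaj_nonneg x y
    · have hyR : ‖y‖ ≤ R := hRsupp y hy
      have hymem : y ∈ closedBall (0 : EuclideanSpace ℝ (Fin d)) R := by
        rw [mem_closedBall, dist_zero_right]; exact hyR
      have h1 : φ y * ‖x - y‖ ^ (-s) ≤ Cφ * ‖x - y‖ ^ (-s) :=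
        mul_le_mul_of_nonneg_right (hCφ' y) (Real.rpow_nonneg (norm_nonneg _) _)
      have h2 : Cφ * ‖x - y‖ ^ (-s) ≤ Cφ * (ker (x - y) + 1) :=
        mul_le_mul_of_nonneg_left (hkerb (x - y)) hCφ0
      simp only [hmaj, Set.indicator_of_mem hymem]
      nlinarith [hker_nonneg (x - y)]
  have hint : ∀ x, Integrable (fun y => φ y * ‖x - y‖ ^ (-s)) := by
    intro x
    refine (hmaj_int x).mono' ?_ (Eventually.of_forall fun y => ?_)
    · exact (hcont.measurable.mul (by fun_prop)).aestronglyMeasurable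
    · rw [Real.norm_of_nonneg (mul_nonneg (hnonneg y) (Real.rpow_nonneg (norm_nonneg _) _))]
      exact hmaj_ge x y
  set g : EuclideanSpace ℝ (Fin d) → ℝ := fun x => ∫ y, φ y * ‖x - y‖ ^ (-s) with hg
  have hg_nonneg : ∀ x, 0 ≤ g x := fun x =>
    integral_nonneg fun y => mul_nonneg (hnonneg y) (Real.rpow_nonneg (norm_nonneg _) _)
  set I₁ : ℝ := ∫ z, ker z with hI₁
  have hI₁0 : 0 ≤ I₁ := integral_nonneg hker_nonneg
  set C : ℝ := Cφ * I₁ +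
    (volume (closedBall (0 : EuclideanSpace ℝ (Fin d)) R)).toReal * Cφ with hC
  have hC0 : 0 ≤ C := by
    have := ENNReal.toReal_nonneg
      (a := volume (closedBall (0 : EuclideanSpace ℝ (Fin d)) R))
    positivity
  have hgC : ∀ x, g x ≤ C := by
    intro x
    have h1 : g x ≤ ∫ y, maj x y := integral_mono (hint x) (hmaj_int x) (hmaj_ge x)
    have h2 : ∫ y, maj x y = C := by
      simp only [hmaj]
      rw [integral_add ((hker_int.comp_sub_left x).const_mul Cφ)
        ((integrableOn_const measure_closedBall_lt_top.ne).integrable_indicator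
          measurableSet_closedBall)]
      rw [integral_const_mul, integral_sub_left_eq_self ker volume x,
        integral_indicator_const _ measurableSet_closedBall]
      simp only [smul_eq_mul, hC, hI₁, Measure.real]
    linarith [h2 ▸ h1]
  set M : ℝ := ∫ y, φ y with hM_def
  have hφint : Integrable φ := hcont.integrable_of_hasCompactSupport hsupp
  have hM : 0 < M := by
    rw [hM_def]
    rw [integral_pos_iff_support_of_nonneg_ae (Eventually.of_forall hnonneg) hφint]
    exact (hcont.isOpen_support).measure_pos volume (Function.support_nonempty_iff.2 hne)
  set c2 : ℝ := (2⁻¹ : ℝ) ^ (-s) with hc2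
  have hc2pos : 0 < c2 := Real.rpow_pos_of_pos (by norm_num) _
  set c4 : ℝ := (2 : ℝ) ^ (-s) with hc4
  have hc4pos : 0 < c4 := Real.rpow_pos_of_pos two_pos _
  set p : ℝ := s * (1 + β) with hp_def
  have hp0 : 0 < p := mul_pos hs0 (by linarith)
  have halg : ∀ (a : ℝ), 0 ≤ a → ∀ x : EuclideanSpace ℝ (Fin d),
      (a * ‖x‖ ^ (-s)) ^ (1 + β) = a ^ (1 + β) * ‖x‖ ^ (-p) := by
    intro a ha x
    rw [Real.mul_rpow ha (Real.rpow_nonneg (norm_nonneg x) _),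
      ← Real.rpow_mul (norm_nonneg x)]
    congr 1
    rw [hp_def]; ring
  -- upper tail bound
  have hupper : ∀ x : EuclideanSpace ℝ (Fin d), 2 * R < ‖x‖ →
      g x ≤ (M * c2) * ‖x‖ ^ (-s) := by
    intro x hx
    have hx0 : (0:ℝ) < ‖x‖ := by linarith
    have hpt : ∀ y, φ y * ‖x - y‖ ^ (-s) ≤ φ y * (c2 * ‖x‖ ^ (-s)) := by
      intro y
      by_cases hy : φ y = 0
      · rw [hy, zero_mul, zero_mul]
      · have hyR : ‖y‖ ≤ R := hRsupp y hy
        have h1 : 2⁻¹ * ‖x‖ ≤ ‖x - y‖ := by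
          have := norm_sub_norm_le x y
          linarith
        have h2 : ‖x - y‖ ^ (-s) ≤ (2⁻¹ * ‖x‖ : ℝ) ^ (-s) :=
          Real.rpow_le_rpow_of_nonpos (by positivity) h1 (neg_nonpos.2 hs0.le)
        have h3 : (2⁻¹ * ‖x‖ : ℝ) ^ (-s) = c2 * ‖x‖ ^ (-s) :=
          Real.mul_rpow (by norm_num) (norm_nonneg x)
        exact mul_le_mul_of_nonneg_left (by rw [← h3]; exact h2) (hnonneg y)
    calc g x ≤ ∫ y, φ y * (c2 * ‖x‖ ^ (-s)) :=
          integral_mono (hint x) (hφint.mul_const _) hpt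
    _ = M * (c2 * ‖x‖ ^ (-s)) := integral_mul_const _ _
    _ = (M * c2) * ‖x‖ ^ (-s) := by ring
  -- lower tail bound
  have hlower : ∀ x : EuclideanSpace ℝ (Fin d), R + 1 ≤ ‖x‖ →
      (M * c4) * ‖x‖ ^ (-s) ≤ g x := by
    intro x hx
    have hx0 : (0:ℝ) < ‖x‖ := by linarith
    have hpt : ∀ y, φ y * (c4 * ‖x‖ ^ (-s)) ≤ φ y * ‖x - y‖ ^ (-s) := by
      intro y
      by_cases hy : φ y = 0
      · rw [hy, zero_mul, zero_mul]
      · have hyR : ‖y‖ ≤ R := hRsupp y hy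
        have h0 : (0:ℝ) < ‖x - y‖ := by
          have := norm_sub_norm_le x y
          linarith
        have h1 : ‖x - y‖ ≤ 2 * ‖x‖ := by
          have := norm_sub_le x y
          linarith
        have h2 : (2 * ‖x‖ : ℝ) ^ (-s) ≤ ‖x - y‖ ^ (-s) :=
          Real.rpow_le_rpow_of_nonpos h0 h1 (neg_nonpos.2 hs0.le)
        have h3 : (2 * ‖x‖ : ℝ) ^ (-s) = c4 * ‖x‖ ^ (-s) :=
          Real.mul_rpow (by norm_num) (norm_nonneg x)
        exact mul_le_mul_of_nonneg_left (by rw [← h3]; exact h2) (hnonneg y)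
    calc (M * c4) * ‖x‖ ^ (-s) = M * (c4 * ‖x‖ ^ (-s)) := by ring
    _ = ∫ y, φ y * (c4 * ‖x‖ ^ (-s)) := (integral_mul_const _ _).symm
    _ ≤ g x := integral_mono (hφint.mul_const _) (hint x) hpt
  have hiff : ((d:ℝ) > α * (1 + 1 / β)) ↔ (d:ℝ) < p := by
    rw [hp_def, hs_def]
    have hβne : β ≠ 0 := hβ0.ne'
    constructor <;> intro h
    · have e : α * (1 + 1 / β) * β = α * (1 + β) := by rw [mul_assoc, add_mul, one_div, inv_mul_cancel₀ hβne]; ring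
      have h' : α * (1 + 1 / β) * β < d * β := mul_lt_mul_of_pos_right h hβ0
      rw [e] at h'
      nlinarith
    · have h' : α * (1 + β) < (d:ℝ) * β := by nlinarith
      rw [gt_iff_lt, show α * (1 + 1 / β) = α * (1 + β) / β by rw [eq_div_iff hβne, mul_assoc, add_mul, one_div, inv_mul_cancel₀ hβne]; ring,
        div_lt_iff₀ hβ0]
      linarith
  constructor
  · -- finiteness → exponent condition
    intro hfin
    by_contra hnot
    have hple : p ≤ d := not_lt.1 fun hc => hnot (hiff.2 hc)
    set c5 : ℝ := (M * c4) ^ (1 + β) with hc5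
    have hc5pos : 0 < c5 := Real.rpow_pos_of_pos (mul_pos hM hc4pos) _
    have hge : ∀ x ∈ {x : EuclideanSpace ℝ (Fin d) | R + 1 ≤ ‖x‖},
        ENNReal.ofReal (c5 * ‖x‖ ^ (-p)) ≤ ENNReal.ofReal ((g x) ^ (1 + β)) := by
      intro x hx
      apply ENNReal.ofReal_le_ofReal
      have h1 := hlower x hx
      have h2 : ((M * c4) * ‖x‖ ^ (-s)) ^ (1 + β) ≤ (g x) ^ (1 + β) :=
        Real.rpow_le_rpow (by positivity) h1 (by linarith)
      calc c5 * ‖x‖ ^ (-p) = ((M * c4) * ‖x‖ ^ (-s)) ^ (1 + β) :=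
            (halg (M * c4) (by positivity) x).symm
      _ ≤ (g x) ^ (1 + β) := h2
    have hSmeas : MeasurableSet {x : EuclideanSpace ℝ (Fin d) | R + 1 ≤ ‖x‖} :=
      measurable_norm measurableSet_Ici
    have h1 : ∫⁻ x in {x : EuclideanSpace ℝ (Fin d) | R + 1 ≤ ‖x‖},
        ENNReal.ofReal (c5 * ‖x‖ ^ (-p)) = ⊤ := by
      have htail := tail_top d hd p hp0 hple (R + 1) (by linarith)
      calc ∫⁻ x in {x : EuclideanSpace ℝ (Fin d) | R + 1 ≤ ‖x‖},
          ENNReal.ofReal (c5 * ‖x‖ ^ (-p))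
          = ∫⁻ x in {x : EuclideanSpace ℝ (Fin d) | R + 1 ≤ ‖x‖},
            ENNReal.ofReal c5 * ENNReal.ofReal (‖x‖ ^ (-p)) := by
            simp_rw [ENNReal.ofReal_mul hc5pos.le]
      _ = ENNReal.ofReal c5 * ∫⁻ x in {x : EuclideanSpace ℝ (Fin d) | R + 1 ≤ ‖x‖},
            ENNReal.ofReal (‖x‖ ^ (-p)) := lintegral_const_mul _ (by fun_prop)
      _ = ⊤ := by
            rw [htail, ENNReal.mul_top]
            simp only [ne_eq, ENNReal.ofReal_eq_zero, not_le]
            exact hc5pos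
    have h2 : (⊤ : ENNReal) ≤ ∫⁻ x : EuclideanSpace ℝ (Fin d),
        ENNReal.ofReal ((g x) ^ (1 + β)) := by
      calc (⊤ : ENNReal) = ∫⁻ x in {x : EuclideanSpace ℝ (Fin d) | R + 1 ≤ ‖x‖},
            ENNReal.ofReal (c5 * ‖x‖ ^ (-p)) := h1.symm
      _ ≤ ∫⁻ x in {x : EuclideanSpace ℝ (Fin d) | R + 1 ≤ ‖x‖},
            ENNReal.ofReal ((g x) ^ (1 + β)) := setLIntegral_mono' hSmeas hge
      _ ≤ _ := setLIntegral_le_lintegral _ _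
    exact absurd (top_le_iff.1 h2) hfin.ne
  · -- exponent condition → finiteness
    intro hgt
    have hpd : (d:ℝ) < p := hiff.1 hgt
    set c3 : ℝ := (M * c2) ^ (1 + β) with hc3
    have hc30 : 0 ≤ c3 := Real.rpow_nonneg (by positivity) _
    set B : Set (EuclideanSpace ℝ (Fin d)) := closedBall 0 (2 * R) with hB
    set F1 : EuclideanSpace ℝ (Fin d) → ENNReal :=
      B.indicator (fun _ => ENNReal.ofReal (C ^ (1 + β))) with hF1
    set F2 : EuclideanSpace ℝ (Fin d) → ENNReal :=
      Bᶜ.indicator (fun x => ENNReal.ofReal (c3 * ‖x‖ ^ (-p))) with hF2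
    have hptw : ∀ x, ENNReal.ofReal ((g x) ^ (1 + β)) ≤ F1 x + F2 x := by
      intro x
      by_cases hx : x ∈ B
      · have h1 : (g x) ^ (1 + β) ≤ C ^ (1 + β) :=
          Real.rpow_le_rpow (hg_nonneg x) (hgC x) (by linarith)
        calc ENNReal.ofReal ((g x) ^ (1 + β)) ≤ ENNReal.ofReal (C ^ (1 + β)) :=
              ENNReal.ofReal_le_ofReal h1
        _ = F1 x := by rw [hF1, Set.indicator_of_mem hx]
        _ ≤ F1 x + F2 x := le_self_add
      · have hx2R : 2 * R < ‖x‖ := by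
          rw [hB, mem_closedBall, dist_zero_right, not_le] at hx
          exact hx
        have h1 : g x ≤ (M * c2) * ‖x‖ ^ (-s) := hupper x hx2R
        have h2 : (g x) ^ (1 + β) ≤ c3 * ‖x‖ ^ (-p) := by
          calc (g x) ^ (1 + β) ≤ ((M * c2) * ‖x‖ ^ (-s)) ^ (1 + β) :=
                Real.rpow_le_rpow (hg_nonneg x) h1 (by linarith)
          _ = c3 * ‖x‖ ^ (-p) := halg (M * c2) (by positivity) x
        calc ENNReal.ofReal ((g x) ^ (1 + β)) ≤ ENNReal.ofReal (c3 * ‖x‖ ^ (-p)) :=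
              ENNReal.ofReal_le_ofReal h2
        _ = F2 x := by rw [hF2, Set.indicator_of_mem (Set.mem_compl hx)]
        _ ≤ F1 x + F2 x := le_add_self
    have hF1fin : ∫⁻ x, F1 x < ⊤ := by
      rw [hF1, lintegral_indicator (by exact measurableSet_closedBall), setLIntegral_const]
      exact ENNReal.mul_lt_top ENNReal.ofReal_lt_top measure_closedBall_lt_top
    have hF2fin : ∫⁻ x, F2 x < ⊤ := by
      rw [hF2, lintegral_indicator (by exact measurableSet_closedBall.compl)]
      have hsub : Bᶜ ⊆ {x : EuclideanSpace ℝ (Fin d) | 1 ≤ ‖x‖} := by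
        intro x hx
        rw [hB, Set.mem_compl_iff, mem_closedBall, dist_zero_right, not_le] at hx
        have : (1:ℝ) ≤ 2 * R := by linarith
        exact le_trans this hx.le
      calc ∫⁻ x in Bᶜ, ENNReal.ofReal (c3 * ‖x‖ ^ (-p))
          ≤ ∫⁻ x in {x : EuclideanSpace ℝ (Fin d) | 1 ≤ ‖x‖},
            ENNReal.ofReal (c3 * ‖x‖ ^ (-p)) := lintegral_mono_set hsub
      _ = ENNReal.ofReal c3 * ∫⁻ x in {x : EuclideanSpace ℝ (Fin d) | 1 ≤ ‖x‖},
            ENNReal.ofReal (‖x‖ ^ (-p)) := by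
            simp_rw [ENNReal.ofReal_mul hc30]
            exact lintegral_const_mul _ (by fun_prop)
      _ < ⊤ := ENNReal.mul_lt_top ENNReal.ofReal_lt_top (tail_fin d p hpd)
    calc ∫⁻ x, ENNReal.ofReal ((g x) ^ (1 + β)) ≤ ∫⁻ x, (F1 x + F2 x) :=
          lintegral_mono hptw
    _ = (∫⁻ x, F1 x) + ∫⁻ x, F2 x :=
          lintegral_add_left (measurable_const.indicator measurableSet_closedBall) _
    _ < ⊤ := ENNReal.add_lt_top.2 ⟨hF1fin, hF2fin⟩
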